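/- For 0 ≤ a < 1/√2 and u(a) = (√2 - a)/√(1-a²), v(a) = (√2 + a)/√(1-a²), and g(x) = (c₁/250)(251Φ̄(x) + φ(x)) with c₁ = 1/(4Φ̄(√2)): k(a) := 1/(2u(a)²) + g(v(a)) - 2g(√2) ≤ 0, with k(0) < 0. -/

import Mathlib

open MeasureTheory Real Set

noncomputable def phi (x : ℝ) : ℝ := Real.exp (-x^2/2) / Real.sqrt (2*Real.pi)
noncomputable def Phibar (x : ℝ) : ℝ := ∫ u in Set.Ioi x, phi u
noncomputable def c1 : ℝ := 1 / (4 * Phibar (Real.sqrt 2))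
noncomputable def g (x : ℝ) : ℝ := c1/250 * (251 * Phibar x + phi x)
noncomputable def uX (a : ℝ) : ℝ := (Real.sqrt 2 - a) / Real.sqrt (1 - a^2)
noncomputable def vX (a : ℝ) : ℝ := (Real.sqrt 2 + a) / Real.sqrt (1 - a^2)
noncomputable def kX (a : ℝ) : ℝ := 1/(2*(uX a)^2) + g (vX a) - 2 * g (Real.sqrt 2)

lemma phi_pos (x : ℝ) : 0 < phi x := by
  unfold phi
  positivity

lemma sqrt_twopi_pos : 0 < Real.sqrt (2*Real.pi) := Real.sqrt_pos.2 (by positivity)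

lemma phi_eq (x : ℝ) : phi x = Real.exp (-(1/2) * x^2) * (Real.sqrt (2*Real.pi))⁻¹ := by
  unfold phi
  rw [div_eq_mul_inv]
  congr 2
  ring

lemma phi_integrable : Integrable phi := by
  have h := integrable_exp_neg_mul_sq (show (0:ℝ) < 1/2 by norm_num)
  have h2 := h.mul_const (Real.sqrt (2*Real.pi))⁻¹
  apply h2.congr
  filter_upwards with x
  rw [phi_eq]

lemma phi_cont : Continuous phi := by
  unfold phi
  fun_prop

lemma phi_anti {x y : ℝ} (hx : 0 ≤ x) (hxy : x ≤ y) : phi y ≤ phi x := by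
  unfold phi
  have h : Real.exp (-y^2/2) ≤ Real.exp (-x^2/2) := Real.exp_le_exp.2 (by nlinarith)
  exact (div_le_div_iff_of_pos_right sqrt_twopi_pos).2 h

lemma Phibar_anti {x y : ℝ} (hxy : x ≤ y) : Phibar y ≤ Phibar x := by
  unfold Phibar
  apply setIntegral_mono_set phi_integrable.integrableOn
  · filter_upwards with t using (phi_pos t).le
  · exact HasSubset.Subset.eventuallyLE (Ioi_subset_Ioi hxy)

lemma integral_phi_Ioi_zero : ∫ x in Ioi (0:ℝ), phi x = 1/2 := by
  have h := integral_gaussian_Ioi (1/2)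
  have h2 : ∫ x in Ioi (0:ℝ), phi x
      = (∫ x in Ioi (0:ℝ), Real.exp (-(1/2) * x^2)) * (Real.sqrt (2*Real.pi))⁻¹ := by
    rw [← integral_mul_const]
    exact setIntegral_congr_fun measurableSet_Ioi fun x _ => phi_eq x
  rw [h2, h]
  rw [show Real.pi / (1/2) = 2 * Real.pi by ring]
  field_simp

lemma Phibar_eq {x : ℝ} (hx : 0 ≤ x) :
    Phibar x = 1/2 - ∫ t in (0:ℝ)..x, phi t := by
  rw [intervalIntegral.integral_of_le hx]
  have hu : Ioc 0 x ∪ Ioi x = Ioi (0:ℝ) := Ioc_union_Ioi_eq_Ioi hx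
  have hsum := setIntegral_union (Ioc_disjoint_Ioi (le_refl x)) measurableSet_Ioi
    (phi_integrable.integrableOn (s := Ioc 0 x)) (phi_integrable.integrableOn (s := Ioi x))
  rw [hu, integral_phi_Ioi_zero] at hsum
  unfold Phibar
  linarith
section Part2

lemma sq_sqrt_two : (Real.sqrt 2)^2 = 2 := Real.sq_sqrt (by norm_num)

lemma sqrt_two_lb : (1.4142135:ℝ) ≤ Real.sqrt 2 := by
  rw [show (2:ℝ) = 1.4142135^2 + (2 - 1.4142135^2) by ring]
  nlinarith [Real.sq_sqrt (show (0:ℝ) ≤ 2 by norm_num), Real.sqrt_nonneg 2]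

lemma sqrt_two_ub : Real.sqrt 2 ≤ 1.41421357 := by
  nlinarith [Real.sq_sqrt (show (0:ℝ) ≤ 2 by norm_num), Real.sqrt_nonneg 2]

lemma exp_poly_bound {t : ℝ} (h0 : 0 ≤ t) (h2 : t ≤ Real.sqrt 2) :
    Real.exp (-t^2/2) ≤ 1 - t^2/2 + t^4/8 - t^6/48 + t^8/384 - t^10/3840
      + t^12/46080 - t^14/645120 + (9/82575360)*t^16 := by
  have hts : t^2 ≤ 2 := by nlinarith [sq_sqrt_two]
  have hx : |(-t^2/2 : ℝ)| ≤ 1 := by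
    rw [abs_of_nonpos (by nlinarith : (-t^2/2:ℝ) ≤ 0)]
    linarith
  have hb := Real.exp_bound hx (n := 8) (by norm_num)
  have h1 := (abs_sub_le_iff.mp hb).1
  have hS : ∑ m ∈ Finset.range 8, (-t^2/2)^m / (Nat.factorial m)
      = 1 - t^2/2 + t^4/8 - t^6/48 + t^8/384 - t^10/3840 + t^12/46080 - t^14/645120 := by
    simp [Finset.sum_range_succ, Nat.factorial]
    ring
  have habs : |(-t^2/2 : ℝ)|^8 = t^16/256 := by
    rw [abs_of_nonpos (by nlinarith)]
    ring
  rw [hS, habs] at h1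
  norm_num [Nat.factorial] at h1
  nlinarith [h1]

lemma Phibar_sqrt2_ge : (0.0786:ℝ) ≤ Phibar (Real.sqrt 2) := by
  have hs0 : (0:ℝ) ≤ Real.sqrt 2 := Real.sqrt_nonneg 2
  rw [Phibar_eq hs0]
  have key : ∫ t in (0:ℝ)..(Real.sqrt 2), phi t ≤ 0.4214 := by
    have h1 : ∫ t in (0:ℝ)..(Real.sqrt 2), phi t
        = (∫ t in (0:ℝ)..(Real.sqrt 2), Real.exp (-t^2/2)) / Real.sqrt (2*Real.pi) := by
      rw [← intervalIntegral.integral_div]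
      rfl
    -- antiderivative
    set Q : ℝ → ℝ := fun t => t - t^3/6 + t^5/40 - t^7/336 + t^9/3456 - t^11/42240
      + t^13/599040 - t^15/9676800 + t^17/155975680 with hQdef
    have hQ : ∀ t : ℝ, HasDerivAt Q (1 - t^2/2 + t^4/8 - t^6/48 + t^8/384 - t^10/3840
        + t^12/46080 - t^14/645120 + (9/82575360)*t^16) t := by
      intro t
      have H := (((((((((hasDerivAt_id t).sub ((hasDerivAt_pow 3 t).div_const 6)).add
        ((hasDerivAt_pow 5 t).div_const 40)).sub ((hasDerivAt_pow 7 t).div_const 336)).add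
        ((hasDerivAt_pow 9 t).div_const 3456)).sub ((hasDerivAt_pow 11 t).div_const 42240)).add
        ((hasDerivAt_pow 13 t).div_const 599040)).sub ((hasDerivAt_pow 15 t).div_const 9676800)).add
        ((hasDerivAt_pow 17 t).div_const 155975680))
      refine H.congr_deriv ?_
      norm_num
      ring
    have hint1 : IntervalIntegrable (fun t : ℝ => Real.exp (-t^2/2)) volume 0 (Real.sqrt 2) :=
      (Continuous.intervalIntegrable (by fun_prop) _ _)
    have hint2 : IntervalIntegrable (fun t : ℝ => 1 - t^2/2 + t^4/8 - t^6/48 + t^8/384 - t^10/3840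
        + t^12/46080 - t^14/645120 + (9/82575360)*t^16) volume 0 (Real.sqrt 2) :=
      (Continuous.intervalIntegrable (by fun_prop) _ _)
    have hmono := intervalIntegral.integral_mono_on (μ := volume) hs0 hint1 hint2
      (fun t ht => exp_poly_bound ht.1 ht.2)
    have hcalc := intervalIntegral.integral_eq_sub_of_hasDerivAt
      (f := Q) (a := (0:ℝ)) (b := Real.sqrt 2) (fun t _ => hQ t) hint2
    -- Q 0 = 0, Q √2 = C * √2
    have hQ0 : Q 0 = 0 := by simp [hQdef]
    have hpows : Q (Real.sqrt 2) = (8784261481/11762150400) * Real.sqrt 2 := by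
      have h2 := sq_sqrt_two
      have p3 : (Real.sqrt 2)^3 = 2 * Real.sqrt 2 := by
        rw [show (3:ℕ) = 2+1 from rfl, pow_succ, h2]
      have p5 : (Real.sqrt 2)^5 = 4 * Real.sqrt 2 := by
        rw [show (5:ℕ) = 2*2+1 from rfl, pow_succ, pow_mul, h2]; norm_num
      have p7 : (Real.sqrt 2)^7 = 8 * Real.sqrt 2 := by
        rw [show (Real.sqrt 2)^7 = ((Real.sqrt 2)^2)^3 * Real.sqrt 2 by ring, h2]; norm_num
      have p9 : (Real.sqrt 2)^9 = 16 * Real.sqrt 2 := by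
        rw [show (9:ℕ) = 2*4+1 from rfl, pow_succ, pow_mul, h2]; norm_num
      have p11 : (Real.sqrt 2)^11 = 32 * Real.sqrt 2 := by
        rw [show (11:ℕ) = 2*5+1 from rfl, pow_succ, pow_mul, h2]; norm_num
      have p13 : (Real.sqrt 2)^13 = 64 * Real.sqrt 2 := by
        rw [show (13:ℕ) = 2*6+1 from rfl, pow_succ, pow_mul, h2]; norm_num
      have p15 : (Real.sqrt 2)^15 = 128 * Real.sqrt 2 := by
        rw [show (15:ℕ) = 2*7+1 from rfl, pow_succ, pow_mul, h2]; norm_num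
      have p17 : (Real.sqrt 2)^17 = 256 * Real.sqrt 2 := by
        rw [show (17:ℕ) = 2*8+1 from rfl, pow_succ, pow_mul, h2]; norm_num
      simp only [hQdef]
      rw [p3, p5, p7, p9, p11, p13, p15, p17]
      ring
    have hCle : (8784261481/11762150400) * Real.sqrt 2 ≤ 0.4214 * Real.sqrt (2*Real.pi) := by
      have hpi := Real.pi_gt_d20
      have h2 := sq_sqrt_two
      have htp : (Real.sqrt (2*Real.pi))^2 = 2*Real.pi := Real.sq_sqrt (by positivity)
      nlinarith [Real.sqrt_nonneg 2, Real.sqrt_nonneg (2*Real.pi), sqrt_twopi_pos,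
        mul_pos (Real.sqrt_pos.2 (show (0:ℝ)<2 by norm_num)) sqrt_twopi_pos]
    rw [h1, div_le_iff₀ sqrt_twopi_pos]
    calc ∫ t in (0:ℝ)..(Real.sqrt 2), Real.exp (-t^2/2)
        ≤ _ := hmono
      _ = Q (Real.sqrt 2) - Q 0 := hcalc
      _ = (8784261481/11762150400) * Real.sqrt 2 := by rw [hQ0, hpows]; ring
      _ ≤ 0.4214 * Real.sqrt (2*Real.pi) := hCle
  linarith

end Part2
section Part3

lemma phi_hasDerivAt (u : ℝ) : HasDerivAt phi (-u * phi u) u := by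
  have h1 : HasDerivAt (fun t : ℝ => -t^2/2) (-u) u := by
    have h := ((hasDerivAt_pow 2 u).neg).div_const 2
    refine h.congr_deriv ?_
    push_cast
    ring
  have h2 := (Real.hasDerivAt_exp (-u^2/2)).comp u h1
  have h3 := h2.div_const (Real.sqrt (2*Real.pi))
  refine h3.congr_deriv ?_
  unfold phi
  ring

lemma sampford {x : ℝ} (hx : 0 < x) :
    Phibar x ≤ phi x * (4/(3*x + Real.sqrt (x^2+8))) := by
  set w : ℝ → ℝ := fun u => Real.sqrt (u^2+8) with hwdef
  set D : ℝ → ℝ := fun u => 3*u + w u with hDdef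
  have hwpos : ∀ u : ℝ, 0 < w u := fun u => Real.sqrt_pos.2 (by positivity)
  have hw2 : ∀ u : ℝ, (w u)^2 = u^2 + 8 := fun u => Real.sq_sqrt (by positivity)
  have hDpos : ∀ u : ℝ, 0 < u → 0 < D u := fun u hu => by
    have := hwpos u; simp only [hDdef]; positivity
  set G : ℝ → ℝ := fun u => -(phi u * (4/(D u))) with hGdef
  set G' : ℝ → ℝ := fun u => phi u * (4*u/(D u) + 4*(3 + u/(w u))/(D u)^2) with hG'def
  have hderiv : ∀ u : ℝ, 0 < u → HasDerivAt G (G' u) u := by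
    intro u hu
    have hww := hwpos u
    have hDD := hDpos u hu
    have hwder : HasDerivAt w (u / w u) u := by
      have ha : HasDerivAt (fun t : ℝ => t^2+8) (2*u) u := by
        simpa using (hasDerivAt_pow 2 u).add_const 8
      have hb := (Real.hasDerivAt_sqrt (show u^2+8 ≠ 0 by positivity)).comp u ha
      refine hb.congr_deriv ?_
      have hsne : Real.sqrt (u^2+8) ≠ 0 := by positivity
      field_simp
      ring
    have hDder : HasDerivAt D (3 + u / w u) u := by
      have := ((hasDerivAt_id u).const_mul (3:ℝ)).add hwder
      refine this.congr_deriv ?_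
      simp
    have hinv : HasDerivAt (fun t => (D t)⁻¹) (-(3 + u / w u)/(D u)^2) u :=
      hDder.inv hDD.ne'
    have hmul := (phi_hasDerivAt u).mul ((hinv.const_mul (4:ℝ)))
    have hG := hmul.neg
    have hGfun : G = (fun t => -(phi t * (4 * (D t)⁻¹))) := by
      funext t
      simp only [hGdef]
      ring
    rw [hGfun]
    refine hG.congr_deriv ?_
    simp only [hG'def]
    field_simp
    ring
  have hG'nonneg : ∀ u : ℝ, 0 < u → 0 ≤ G' u := by
    intro u hu
    have h1 := phi_pos u; have h2 := hwpos u; have h3 := hDpos u hu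
    simp only [hG'def]
    positivity
  have hkey : ∀ u : ℝ, 0 < u → phi u ≤ G' u := by
    intro u hu
    have hww := hwpos u
    have hDD := hDpos u hu
    have hw2u := hw2 u
    have hphi := phi_pos u
    have key : u*(u^2+6) ≤ w u * (u^2+2) := by
      have hsq : (w u * (u^2+2))^2 = (u*(u^2+6))^2 + 32 := by
        rw [mul_pow, hw2u]; ring
      nlinarith [mul_pos hww (show (0:ℝ) < u^2+2 by positivity),
        mul_pos hu (show (0:ℝ) < u^2+6 by positivity)]
    have e1 : (w u)^3 = (u^2+8) * w u := by
      rw [show (3:ℕ) = 2+1 from rfl, pow_succ, hw2u]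
    have hineq : (D u)^2 * w u ≤ 4*u*(D u)*(w u) + 12*(w u) + 4*u := by
      simp only [hDdef]
      nlinarith [key, hw2u, e1]
    have hsum : 4*u/(D u) + 4*(3 + u/(w u))/(D u)^2
        = (4*u*(D u)*(w u) + 12*(w u) + 4*u)/((D u)^2 * (w u)) := by
      field_simp
      ring
    have hfrac : 1 ≤ 4*u/(D u) + 4*(3 + u/(w u))/(D u)^2 := by
      rw [hsum, le_div_iff₀ (by positivity)]
      linarith
    simp only [hG'def]
    nlinarith [hfrac, hphi]
  have htendphi : Filter.Tendsto phi Filter.atTop (nhds 0) := by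
    have hsq : Filter.Tendsto (fun u : ℝ => u^2) Filter.atTop Filter.atTop :=
      Filter.tendsto_pow_atTop (by norm_num)
    have hneg : Filter.Tendsto (fun u : ℝ => -u^2) Filter.atTop Filter.atBot :=
      Filter.tendsto_neg_atBot_iff.mpr hsq
    have h1 : Filter.Tendsto (fun u : ℝ => -u^2/2) Filter.atTop Filter.atBot :=
      (Filter.tendsto_div_const_atBot_of_pos (show (0:ℝ) < 2 by norm_num)).mpr hneg
    have h2 := Real.tendsto_exp_atBot.comp h1
    have h3 := h2.div_const (Real.sqrt (2*Real.pi))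
    have h4 : Filter.Tendsto phi Filter.atTop (nhds (0 / Real.sqrt (2*Real.pi))) :=
      h3.congr (fun u => rfl)
    simpa using h4
  have htendG : Filter.Tendsto G Filter.atTop (nhds 0) := by
    rw [show (0:ℝ) = -0 by norm_num]
    apply Filter.Tendsto.neg
    apply squeeze_zero' (g := fun u => phi u * (4/3))
    · filter_upwards [Filter.eventually_ge_atTop (1:ℝ)] with u hu
      have h1 := (phi_pos u).le
      have h2 := hDpos u (by linarith)
      positivity
    · filter_upwards [Filter.eventually_ge_atTop (1:ℝ)] with u hu
      have hDl : (3:ℝ) ≤ D u := by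
        have := (hwpos u).le
        simp only [hDdef]
        nlinarith
      have h4 : 4/(D u) ≤ 4/3 :=
        div_le_div_of_nonneg_left (by norm_num) (by norm_num) hDl
      have h5 := (phi_pos u).le
      nlinarith
    · have := htendphi.mul_const (4/3 : ℝ)
      simpa using this
  have hcont : ContinuousWithinAt G (Ici x) x := (hderiv x hx).continuousAt.continuousWithinAt
  have hint : IntegrableOn G' (Ioi x) volume :=
    integrableOn_Ioi_deriv_of_nonneg hcont (fun u hu => hderiv u (hx.trans hu))
      (fun u hu => hG'nonneg u (hx.trans hu)) htendG
  have heq : ∫ u in Ioi x, G' u = 0 - G x :=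
    integral_Ioi_of_hasDerivAt_of_tendsto hcont (fun u hu => hderiv u (hx.trans hu)) hint htendG
  have hmono : Phibar x ≤ ∫ u in Ioi x, G' u := by
    unfold Phibar
    apply setIntegral_mono_on phi_integrable.integrableOn hint measurableSet_Ioi
    intro u hu
    exact hkey u (hx.trans hu)
  rw [heq] at hmono
  simp only [hGdef, hDdef, hwdef] at hmono
  calc Phibar x ≤ _ := hmono
    _ = phi x * (4/(3*x + Real.sqrt (x^2+8))) := by ring

end Part3
section Part4

lemma Phibar_sqrt2_pos : 0 < Phibar (Real.sqrt 2) :=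
  lt_of_lt_of_le (by norm_num) Phibar_sqrt2_ge

lemma sqrt_twopi_ub : Real.sqrt (2*Real.pi) ≤ 2.5066283 := by
  have h := Real.pi_lt_d20
  rw [show (2.5066283:ℝ) = Real.sqrt (2.5066283^2) from (Real.sqrt_sq (by norm_num)).symm]
  apply Real.sqrt_le_sqrt
  nlinarith

lemma sqrt_twopi_lb : (2.5066282:ℝ) ≤ Real.sqrt (2*Real.pi) := by
  have h := Real.pi_gt_d20
  rw [show (2.5066282:ℝ) = Real.sqrt (2.5066282^2) from (Real.sqrt_sq (by norm_num)).symm]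
  apply Real.sqrt_le_sqrt
  nlinarith

lemma phi_sqrt2_ge : (0.1467:ℝ) ≤ phi (Real.sqrt 2) := by
  unfold phi
  rw [show -(Real.sqrt 2)^2/2 = -1 by rw [sq_sqrt_two]; norm_num]
  have hexp : (1/2.7182818286 : ℝ) ≤ Real.exp (-1) := by
    rw [Real.exp_neg]
    have h := Real.exp_one_lt_d9
    have h0 := Real.exp_pos 1
    rw [one_div]
    exact inv_anti₀ h0 h.le
  have hub := sqrt_twopi_ub
  have hpos := sqrt_twopi_pos
  calc (0.1467:ℝ) ≤ (1/2.7182818286) / 2.5066283 := by norm_num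
    _ ≤ Real.exp (-1) / Real.sqrt (2*Real.pi) := div_le_div₀ (Real.exp_pos _).le hexp hpos hub

lemma g_anti {x y : ℝ} (hx : 0 ≤ x) (hxy : x ≤ y) : g y ≤ g x := by
  have h1 : Phibar y ≤ Phibar x := Phibar_anti hxy
  have h2 : phi y ≤ phi x := phi_anti hx hxy
  have hc : 0 < c1 := by
    unfold c1
    have := Phibar_sqrt2_pos
    positivity
  unfold g
  nlinarith

lemma key_ineq {r A E wq : ℝ} (hr : 0 < r) (hA : Phibar wq ≤ A) (hE : phi wq ≤ E)
    (hfin : 1/(2*r) - 251/500 + (251*A + E - 2*(0.1467))/(1000*(0.0786)) ≤ 0)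
    (hN : 0 ≤ 251*A + E - 2*(0.1467)) :
    1/(2*r) + g wq - 2 * g (Real.sqrt 2) ≤ 0 := by
  have hL := Phibar_sqrt2_ge
  have hD := phi_sqrt2_ge
  have hP := Phibar_sqrt2_pos
  have hgid : g wq - 2*g (Real.sqrt 2)
      = (251*(Phibar wq) + (phi wq) - 2*(phi (Real.sqrt 2)))/(1000*(Phibar (Real.sqrt 2)))
        - 251/500 := by
    unfold g c1
    field_simp
    ring
  have hnum : 251*(Phibar wq) + (phi wq) - 2*(phi (Real.sqrt 2))
      ≤ 251*A + E - 2*(0.1467) := by linarith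
  have h1000 : (0:ℝ) < 1000*(Phibar (Real.sqrt 2)) := by positivity
  have hstep1 : (251*(Phibar wq) + (phi wq) - 2*(phi (Real.sqrt 2)))/(1000*(Phibar (Real.sqrt 2)))
      ≤ (251*A + E - 2*(0.1467))/(1000*(Phibar (Real.sqrt 2))) :=
    (div_le_div_iff_of_pos_right h1000).2 hnum
  have hstep2 : (251*A + E - 2*(0.1467))/(1000*(Phibar (Real.sqrt 2)))
      ≤ (251*A + E - 2*(0.1467))/(1000*(0.0786)) :=
    div_le_div_of_nonneg_left hN (by norm_num) (by linarith)
  linarith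

lemma exp_upper {c S B : ℝ} (hc : 0 ≤ c)
    (hS : S ≤ ∑ i ∈ Finset.range 26, c^i / (Nat.factorial i)) (hS0 : 0 < S)
    (hB : S⁻¹ ≤ B) : Real.exp (-c) ≤ B := by
  have h1 := Real.sum_le_exp_of_nonneg hc 26
  have h2 : S ≤ Real.exp c := hS.trans h1
  rw [Real.exp_neg]
  exact le_trans (inv_anti₀ hS0 h2) hB

set_option maxHeartbeats 1000000 in
lemma cell {p q r wq σ B : ℝ}
    (hp : 0 ≤ p) (hq1 : p ≤ q) (hq : q ≤ 0.7072)
    (hr : 0 < r)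
    (hc1 : (1+r)*q ≤ 1.4142135)
    (hc2 : 0 ≤ (1+r)*q^2 - 2*(1.41421357)*q + (2 - r))
    (hw : 0 < wq)
    (hc3 : wq^2 ≤ (1+wq^2)*p^2 + 2*(1.4142135)*p + 2)
    (hσ : 0 ≤ σ) (hσ2 : σ^2 ≤ wq^2 + 8)
    (hB : Real.exp (-(wq^2/2)) ≤ B) (hB0 : 0 ≤ B)
    (hfin : 1/(2*r) - 251/500
        + (251*((B/2.5066282)*(4/(3*wq+σ))) + (B/2.5066282) - 2*(0.1467))/(1000*(0.0786)) ≤ 0)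
    (hN : 0 ≤ 251*((B/2.5066282)*(4/(3*wq+σ))) + (B/2.5066282) - 2*(0.1467)) :
    ∀ a : ℝ, p ≤ a → a ≤ q → kX a ≤ 0 := by
  intro a hpa haq
  have ha0 : 0 ≤ a := hp.trans hpa
  have hq0 : 0 ≤ q := ha0.trans haq
  have ha1 : a ≤ 0.7072 := haq.trans hq
  have hs2lb := sqrt_two_lb
  have hs2ub := sqrt_two_ub
  have hss := sq_sqrt_two
  have h1a : 0 < 1 - a^2 := by nlinarith
  have hsq1a : 0 < Real.sqrt (1-a^2) := Real.sqrt_pos.2 h1a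
  have hsq1a2 : (Real.sqrt (1-a^2))^2 = 1-a^2 := Real.sq_sqrt h1a.le
  -- u bound
  have hqq : 0 ≤ (1+r)*q^2 - 2*(Real.sqrt 2)*q + (2 - r) := by nlinarith
  have hlin : 0 ≤ 2*(Real.sqrt 2) - (1+r)*(a+q) := by nlinarith
  have hquad : 0 ≤ (1+r)*a^2 - 2*(Real.sqrt 2)*a + (2 - r) := by
    nlinarith [mul_nonneg (sub_nonneg.2 haq) hlin]
  have hu2 : r ≤ (uX a)^2 := by
    unfold uX
    rw [div_pow, hsq1a2, le_div_iff₀ h1a]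
    nlinarith
  have hkuu : 1/(2*(uX a)^2) ≤ 1/(2*r) :=
    one_div_le_one_div_of_le (by linarith) (by linarith)
  -- v bound
  have hmono : wq^2 ≤ (1+wq^2)*a^2 + 2*(Real.sqrt 2)*a + 2 := by
    nlinarith [mul_nonneg (sub_nonneg.2 hpa) (show (0:ℝ) ≤ a + p by linarith),
      mul_nonneg (sub_nonneg.2 hpa) (show (0:ℝ) ≤ Real.sqrt 2 by linarith),
      mul_nonneg (show (0:ℝ) ≤ Real.sqrt 2 - 1.4142135 by linarith) hp]
  have hv2 : wq^2 ≤ (vX a)^2 := by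
    unfold vX
    rw [div_pow, hsq1a2, le_div_iff₀ h1a]
    nlinarith
  have hv0 : 0 ≤ vX a := by
    unfold vX
    apply div_nonneg (by linarith) hsq1a.le
  have hwv : wq ≤ vX a := by
    have h := Real.sqrt_le_sqrt hv2
    rwa [Real.sqrt_sq hw.le, Real.sqrt_sq hv0] at h
  have hg : g (vX a) ≤ g wq := g_anti hw.le hwv
  -- Phibar wq and phi wq bounds
  have hphiw : phi wq ≤ B/2.5066282 := by
    unfold phi
    rw [neg_div]
    exact div_le_div₀ hB0 hB (by norm_num) sqrt_twopi_lb
  have hσle : σ ≤ Real.sqrt (wq^2+8) := by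
    have h := Real.sqrt_le_sqrt hσ2
    rwa [Real.sqrt_sq hσ] at h
  have hD3 : (0:ℝ) < 3*wq + σ := by linarith
  have hPw : Phibar wq ≤ (B/2.5066282)*(4/(3*wq+σ)) := by
    calc Phibar wq ≤ phi wq * (4/(3*wq + Real.sqrt (wq^2+8))) := sampford hw
      _ ≤ (B/2.5066282) * (4/(3*wq+σ)) := by
          apply mul_le_mul hphiw
            (div_le_div_of_nonneg_left (by norm_num) hD3 (by linarith))
            (by positivity) (by positivity)
  have hk := key_ineq hr hPw hphiw hfin hN
  unfold kX
  linarith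

end Part4
section Part5

lemma cell0 : ∀ a : ℝ, (0:ℝ) ≤ a → a ≤ ((153:ℝ)/100000) → kX a ≤ 0 :=
  cell (p := (0:ℝ)) (q := ((153:ℝ)/100000)) (r := ((9978397:ℝ)/5000000)) (wq := ((1414213:ℝ)/1000000)) (σ := ((15811387:ℝ)/5000000)) (B := ((45984966719:ℝ)/125000000000))
    (by norm_num) (by norm_num) (by norm_num) (by norm_num) (by norm_num) (by norm_num)
    (by norm_num) (by norm_num) (by norm_num) (by norm_num)
    (exp_upper (S := ((1359139833284116693145218319911:ℝ)/500000000000000000000000000000)) (by norm_num)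
      (by norm_num [Finset.sum_range_succ, Nat.factorial]) (by norm_num) (by norm_num))
    (by norm_num) (by norm_num) (by norm_num)

lemma cell1 : ∀ a : ℝ, ((153:ℝ)/100000) ≤ a → a ≤ ((383:ℝ)/100000) → kX a ≤ 0 :=
  cell (p := ((153:ℝ)/100000)) (q := ((383:ℝ)/100000)) (r := ((4973027:ℝ)/2500000)) (wq := ((283149:ℝ)/200000)) (σ := ((7907407:ℝ)/2500000)) (B := ((22942695437:ℝ)/62500000000))
    (by norm_num) (by norm_num) (by norm_num) (by norm_num) (by norm_num) (by norm_num)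
    (by norm_num) (by norm_num) (by norm_num) (by norm_num)
    (exp_upper (S := ((2724178602804450867711339736977:ℝ)/1000000000000000000000000000000)) (by norm_num)
      (by norm_num [Finset.sum_range_succ, Nat.factorial]) (by norm_num) (by norm_num))
    (by norm_num) (by norm_num) (by norm_num)

lemma cell2 : ∀ a : ℝ, ((383:ℝ)/100000) ≤ a → a ≤ ((613:ℝ)/100000) → kX a ≤ 0 :=
  cell (p := ((383:ℝ)/100000)) (q := ((613:ℝ)/100000)) (r := ((19827737:ℝ)/10000000)) (wq := ((1418053:ℝ)/1000000)) (σ := ((6327993:ℝ)/2000000)) (B := ((73176930277:ℝ)/200000000000))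
    (by norm_num) (by norm_num) (by norm_num) (by norm_num) (by norm_num) (by norm_num)
    (by norm_num) (by norm_num) (by norm_num) (by norm_num)
    (exp_upper (S := ((1366550900966619980702999325759:ℝ)/500000000000000000000000000000)) (by norm_num)
      (by norm_num [Finset.sum_range_succ, Nat.factorial]) (by norm_num) (by norm_num))
    (by norm_num) (by norm_num) (by norm_num)

lemma cell3 : ∀ a : ℝ, ((613:ℝ)/100000) ≤ a → a ≤ ((959:ℝ)/100000) → kX a ≤ 0 :=
  cell (p := ((613:ℝ)/100000)) (q := ((959:ℝ)/100000)) (r := ((19731487:ℝ)/10000000)) (wq := ((142037:ℝ)/100000)) (σ := ((7912589:ℝ)/2500000)) (B := ((364683484103:ℝ)/1000000000000))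
    (by norm_num) (by norm_num) (by norm_num) (by norm_num) (by norm_num) (by norm_num)
    (by norm_num) (by norm_num) (by norm_num) (by norm_num)
    (exp_upper (S := ((342762986121463513002325014767:ℝ)/125000000000000000000000000000)) (by norm_num)
      (by norm_num [Finset.sum_range_succ, Nat.factorial]) (by norm_num) (by norm_num))
    (by norm_num) (by norm_num) (by norm_num)

lemma cell4 : ∀ a : ℝ, ((959:ℝ)/100000) ≤ a → a ≤ ((1479:ℝ)/100000) → kX a ≤ 0 :=
  cell (p := ((959:ℝ)/100000)) (q := ((1479:ℝ)/100000)) (r := ((9794073:ℝ)/5000000)) (wq := ((1423869:ℝ)/1000000)) (σ := ((15833037:ℝ)/5000000)) (B := ((362873327897:ℝ)/1000000000000))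
    (by norm_num) (by norm_num) (by norm_num) (by norm_num) (by norm_num) (by norm_num)
    (by norm_num) (by norm_num) (by norm_num) (by norm_num)
    (exp_upper (S := ((2755782591674194965768282870433:ℝ)/1000000000000000000000000000000)) (by norm_num)
      (by norm_num [Finset.sum_range_succ, Nat.factorial]) (by norm_num) (by norm_num))
    (by norm_num) (by norm_num) (by norm_num)

lemma cell5 : ∀ a : ℝ, ((1479:ℝ)/100000) ≤ a → a ≤ ((1999:ℝ)/100000) → kX a ≤ 0 :=
  cell (p := ((1479:ℝ)/100000)) (q := ((1999:ℝ)/100000)) (r := ((19446363:ℝ)/10000000)) (wq := ((1429159:ℝ)/1000000)) (σ := ((3961237:ℝ)/1250000)) (B := ((72029059583:ℝ)/200000000000))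
    (by norm_num) (by norm_num) (by norm_num) (by norm_num) (by norm_num) (by norm_num)
    (by norm_num) (by norm_num) (by norm_num) (by norm_num)
    (exp_upper (S := ((2776657104203706020962513698391:ℝ)/1000000000000000000000000000000)) (by norm_num)
      (by norm_num [Finset.sum_range_succ, Nat.factorial]) (by norm_num) (by norm_num))
    (by norm_num) (by norm_num) (by norm_num)

lemma cell6 : ∀ a : ℝ, ((1999:ℝ)/100000) ≤ a → a ≤ ((2779:ℝ)/100000) → kX a ≤ 0 :=
  cell (p := ((1999:ℝ)/100000)) (q := ((2779:ℝ)/100000)) (r := ((9618279:ℝ)/5000000)) (wq := ((143449:ℝ)/100000)) (σ := ((15856987:ℝ)/5000000)) (B := ((357406753569:ℝ)/1000000000000))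
    (by norm_num) (by norm_num) (by norm_num) (by norm_num) (by norm_num) (by norm_num)
    (by norm_num) (by norm_num) (by norm_num) (by norm_num)
    (exp_upper (S := ((2797932579663466159697880183787:ℝ)/1000000000000000000000000000000)) (by norm_num)
      (by norm_num [Finset.sum_range_succ, Nat.factorial]) (by norm_num) (by norm_num))
    (by norm_num) (by norm_num) (by norm_num)

lemma cell7 : ∀ a : ℝ, ((2779:ℝ)/100000) ≤ a → a ≤ ((3559:ℝ)/100000) → kX a ≤ 0 :=
  cell (p := ((2779:ℝ)/100000)) (q := ((3559:ℝ)/100000)) (r := ((4757533:ℝ)/2500000)) (wq := ((4508:ℝ)/3125)) (σ := ((15875279:ℝ)/5000000)) (B := ((353281645771:ℝ)/1000000000000))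
    (by norm_num) (by norm_num) (by norm_num) (by norm_num) (by norm_num) (by norm_num)
    (by norm_num) (by norm_num) (by norm_num) (by norm_num)
    (exp_upper (S := ((2830602755540618481154021637311:ℝ)/1000000000000000000000000000000)) (by norm_num)
      (by norm_num [Finset.sum_range_succ, Nat.factorial]) (by norm_num) (by norm_num))
    (by norm_num) (by norm_num) (by norm_num)

lemma cell8 : ∀ a : ℝ, ((3559:ℝ)/100000) ≤ a → a ≤ ((4729:ℝ)/100000) → kX a ≤ 0 :=
  cell (p := ((3559:ℝ)/100000)) (q := ((4729:ℝ)/100000)) (r := ((9363339:ℝ)/5000000)) (wq := ((725361:ℝ)/500000)) (σ := ((7946931:ℝ)/2500000)) (B := ((174567404241:ℝ)/500000000000))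
    (by norm_num) (by norm_num) (by norm_num) (by norm_num) (by norm_num) (by norm_num)
    (by norm_num) (by norm_num) (by norm_num) (by norm_num)
    (exp_upper (S := ((1432111573676818625127107078071:ℝ)/500000000000000000000000000000)) (by norm_num)
      (by norm_num [Finset.sum_range_succ, Nat.factorial]) (by norm_num) (by norm_num))
    (by norm_num) (by norm_num) (by norm_num)

lemma cell9 : ∀ a : ℝ, ((4729:ℝ)/100000) ≤ a → a ≤ ((5899:ℝ)/100000) → kX a ≤ 0 :=
  cell (p := ((4729:ℝ)/100000)) (q := ((5899:ℝ)/100000)) (r := ((9215221:ℝ)/5000000)) (wq := ((73157:ℝ)/50000)) (σ := ((31844589:ℝ)/10000000)) (B := ((13714999999:ℝ)/40000000000))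
    (by norm_num) (by norm_num) (by norm_num) (by norm_num) (by norm_num) (by norm_num)
    (by norm_num) (by norm_num) (by norm_num) (by norm_num)
    (exp_upper (S := ((2916514765076573828633271427991:ℝ)/1000000000000000000000000000000)) (by norm_num)
      (by norm_num [Finset.sum_range_succ, Nat.factorial]) (by norm_num) (by norm_num))
    (by norm_num) (by norm_num) (by norm_num)

lemma cell10 : ∀ a : ℝ, ((5899:ℝ)/100000) ≤ a → a ≤ ((3827:ℝ)/50000) → kX a ≤ 0 :=
  cell (p := ((5899:ℝ)/100000)) (q := ((3827:ℝ)/50000)) (r := ((359983:ℝ)/200000)) (wq := ((1475773:ℝ)/1000000)) (σ := ((3190283:ℝ)/1000000)) (B := ((21035544097:ℝ)/62500000000))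
    (by norm_num) (by norm_num) (by norm_num) (by norm_num) (by norm_num) (by norm_num)
    (by norm_num) (by norm_num) (by norm_num) (by norm_num)
    (exp_upper (S := ((1485580779651694816125162856997:ℝ)/500000000000000000000000000000)) (by norm_num)
      (by norm_num [Finset.sum_range_succ, Nat.factorial]) (by norm_num) (by norm_num))
    (by norm_num) (by norm_num) (by norm_num)

lemma cell11 : ∀ a : ℝ, ((3827:ℝ)/50000) ≤ a → a ≤ ((9409:ℝ)/100000) → kX a ≤ 0 :=
  cell (p := ((3827:ℝ)/50000)) (q := ((9409:ℝ)/100000)) (r := ((17582921:ℝ)/10000000)) (wq := ((1495139:ℝ)/1000000)) (σ := ((255943:ℝ)/80000)) (B := ((65404891673:ℝ)/200000000000))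
    (by norm_num) (by norm_num) (by norm_num) (by norm_num) (by norm_num) (by norm_num)
    (by norm_num) (by norm_num) (by norm_num) (by norm_num)
    (exp_upper (S := ((3057875258020106340779054679223:ℝ)/1000000000000000000000000000000)) (by norm_num)
      (by norm_num [Finset.sum_range_succ, Nat.factorial]) (by norm_num) (by norm_num))
    (by norm_num) (by norm_num) (by norm_num)

lemma cell12 : ∀ a : ℝ, ((9409:ℝ)/100000) ≤ a → a ≤ ((6021:ℝ)/50000) → kX a ≤ 0 :=
  cell (p := ((9409:ℝ)/100000)) (q := ((6021:ℝ)/50000)) (r := ((424633:ℝ)/250000)) (wq := ((94689:ℝ)/62500)) (σ := ((16043143:ℝ)/5000000)) (B := ((31738210251:ℝ)/100000000000))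
    (by norm_num) (by norm_num) (by norm_num) (by norm_num) (by norm_num) (by norm_num)
    (by norm_num) (by norm_num) (by norm_num) (by norm_num)
    (exp_upper (S := ((630155255821098704486905810073:ℝ)/200000000000000000000000000000)) (by norm_num)
      (by norm_num [Finset.sum_range_succ, Nat.factorial]) (by norm_num) (by norm_num))
    (by norm_num) (by norm_num) (by norm_num)

lemma cell13 : ∀ a : ℝ, ((6021:ℝ)/50000) ≤ a → a ≤ ((587:ℝ)/4000) → kX a ≤ 0 :=
  cell (p := ((6021:ℝ)/50000)) (q := ((587:ℝ)/4000)) (r := ((16418213:ℝ)/10000000)) (wq := ((772941:ℝ)/500000)) (σ := ((2014571:ℝ)/625000)) (B := ((151370809633:ℝ)/500000000000))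
    (by norm_num) (by norm_num) (by norm_num) (by norm_num) (by norm_num) (by norm_num)
    (by norm_num) (by norm_num) (by norm_num) (by norm_num)
    (exp_upper (S := ((3303146763984231588086669634849:ℝ)/1000000000000000000000000000000)) (by norm_num)
      (by norm_num [Finset.sum_range_succ, Nat.factorial]) (by norm_num) (by norm_num))
    (by norm_num) (by norm_num) (by norm_num)

lemma cell14 : ∀ a : ℝ, ((587:ℝ)/4000) ≤ a → a ≤ ((149:ℝ)/800) → kX a ≤ 0 :=
  cell (p := ((587:ℝ)/4000)) (q := ((149:ℝ)/800)) (r := ((3124163:ℝ)/2000000)) (wq := ((24657:ℝ)/15625)) (σ := ((32388633:ℝ)/10000000)) (B := ((287907006481:ℝ)/1000000000000))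
    (by norm_num) (by norm_num) (by norm_num) (by norm_num) (by norm_num) (by norm_num)
    (by norm_num) (by norm_num) (by norm_num) (by norm_num)
    (exp_upper (S := ((434167968080981391598036643633:ℝ)/125000000000000000000000000000)) (by norm_num)
      (by norm_num [Finset.sum_range_succ, Nat.factorial]) (by norm_num) (by norm_num))
    (by norm_num) (by norm_num) (by norm_num)

lemma cell15 : ∀ a : ℝ, ((149:ℝ)/800) ≤ a → a ≤ ((903:ℝ)/4000) → kX a ≤ 0 :=
  cell (p := ((149:ℝ)/800)) (q := ((903:ℝ)/4000)) (r := ((2976587:ℝ)/2000000)) (wq := ((814483:ℝ)/500000)) (σ := ((16319873:ℝ)/5000000)) (B := ((3316677503:ℝ)/12500000000))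
    (by norm_num) (by norm_num) (by norm_num) (by norm_num) (by norm_num) (by norm_num)
    (by norm_num) (by norm_num) (by norm_num) (by norm_num)
    (exp_upper (S := ((942207976863197538259401898593:ℝ)/250000000000000000000000000000)) (by norm_num)
      (by norm_num [Finset.sum_range_succ, Nat.factorial]) (by norm_num) (by norm_num))
    (by norm_num) (by norm_num) (by norm_num)

lemma cell16 : ∀ a : ℝ, ((903:ℝ)/4000) ≤ a → a ≤ ((1061:ℝ)/4000) → kX a ≤ 0 :=
  cell (p := ((903:ℝ)/4000)) (q := ((1061:ℝ)/4000)) (r := ((14200267:ℝ)/10000000)) (wq := ((84171:ℝ)/50000)) (σ := ((16457447:ℝ)/5000000)) (B := ((121226009473:ℝ)/500000000000))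
    (by norm_num) (by norm_num) (by norm_num) (by norm_num) (by norm_num) (by norm_num)
    (by norm_num) (by norm_num) (by norm_num) (by norm_num)
    (exp_upper (S := ((4124527419277770764519656135661:ℝ)/1000000000000000000000000000000)) (by norm_num)
      (by norm_num [Finset.sum_range_succ, Nat.factorial]) (by norm_num) (by norm_num))
    (by norm_num) (by norm_num) (by norm_num)

lemma cell17 : ∀ a : ℝ, ((1061:ℝ)/4000) ≤ a → a ≤ ((1219:ℝ)/4000) → kX a ≤ 0 :=
  cell (p := ((1061:ℝ)/4000)) (q := ((1219:ℝ)/4000)) (r := ((13569309:ℝ)/10000000)) (wq := ((1741857:ℝ)/1000000)) (σ := ((8304391:ℝ)/2500000)) (B := ((109680894877:ℝ)/500000000000))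
    (by norm_num) (by norm_num) (by norm_num) (by norm_num) (by norm_num) (by norm_num)
    (by norm_num) (by norm_num) (by norm_num) (by norm_num)
    (exp_upper (S := ((4558679071342319922719681162259:ℝ)/1000000000000000000000000000000)) (by norm_num)
      (by norm_num [Finset.sum_range_succ, Nat.factorial]) (by norm_num) (by norm_num))
    (by norm_num) (by norm_num) (by norm_num)

lemma cell18 : ∀ a : ℝ, ((1219:ℝ)/4000) ≤ a → a ≤ ((1377:ℝ)/4000) → kX a ≤ 0 :=
  cell (p := ((1219:ℝ)/4000)) (q := ((1377:ℝ)/4000)) (r := ((12987321:ℝ)/10000000)) (wq := ((902407:ℝ)/500000)) (σ := ((33551979:ℝ)/10000000)) (B := ((19618900223:ℝ)/100000000000))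
    (by norm_num) (by norm_num) (by norm_num) (by norm_num) (by norm_num) (by norm_num)
    (by norm_num) (by norm_num) (by norm_num) (by norm_num)
    (exp_upper (S := ((5097125672875951016888283529001:ℝ)/1000000000000000000000000000000)) (by norm_num)
      (by norm_num [Finset.sum_range_succ, Nat.factorial]) (by norm_num) (by norm_num))
    (by norm_num) (by norm_num) (by norm_num)

lemma cell19 : ∀ a : ℝ, ((1377:ℝ)/4000) ≤ a → a ≤ ((307:ℝ)/800) → kX a ≤ 0 :=
  cell (p := ((1377:ℝ)/4000)) (q := ((307:ℝ)/800)) (r := ((12452331:ℝ)/10000000)) (wq := ((1872941:ℝ)/1000000)) (σ := ((33923307:ℝ)/10000000)) (B := ((173088198801:ℝ)/1000000000000))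
    (by norm_num) (by norm_num) (by norm_num) (by norm_num) (by norm_num) (by norm_num)
    (by norm_num) (by norm_num) (by norm_num) (by norm_num)
    (exp_upper (S := ((5777401388010948138226699685173:ℝ)/1000000000000000000000000000000)) (by norm_num)
      (by norm_num [Finset.sum_range_succ, Nat.factorial]) (by norm_num) (by norm_num))
    (by norm_num) (by norm_num) (by norm_num)

lemma cell20 : ∀ a : ℝ, ((307:ℝ)/800) ≤ a → a ≤ ((1693:ℝ)/4000) → kX a ≤ 0 :=
  cell (p := ((307:ℝ)/800)) (q := ((1693:ℝ)/4000)) (r := ((11963177:ℝ)/10000000)) (wq := ((973517:ℝ)/500000)) (σ := ((1716897:ℝ)/500000)) (B := ((15024759707:ℝ)/100000000000))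
    (by norm_num) (by norm_num) (by norm_num) (by norm_num) (by norm_num) (by norm_num)
    (by norm_num) (by norm_num) (by norm_num) (by norm_num)
    (exp_upper (S := ((3327840243391243905003444861201:ℝ)/500000000000000000000000000000)) (by norm_num)
      (by norm_num [Finset.sum_range_succ, Nat.factorial]) (by norm_num) (by norm_num))
    (by norm_num) (by norm_num) (by norm_num)

lemma cell21 : ∀ a : ℝ, ((1693:ℝ)/4000) ≤ a → a ≤ ((1851:ℝ)/4000) → kX a ≤ 0 :=
  cell (p := ((1693:ℝ)/4000)) (q := ((1851:ℝ)/4000)) (r := ((11519609:ℝ)/10000000)) (wq := ((507019:ℝ)/250000)) (σ := ((34803867:ℝ)/10000000)) (B := ((63947470157:ℝ)/500000000000))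
    (by norm_num) (by norm_num) (by norm_num) (by norm_num) (by norm_num) (by norm_num)
    (by norm_num) (by norm_num) (by norm_num) (by norm_num)
    (exp_upper (S := ((244341175056974805403058371873:ℝ)/31250000000000000000000000000)) (by norm_num)
      (by norm_num [Finset.sum_range_succ, Nat.factorial]) (by norm_num) (by norm_num))
    (by norm_num) (by norm_num) (by norm_num)

lemma cell22 : ∀ a : ℝ, ((1851:ℝ)/4000) ≤ a → a ≤ ((2009:ℝ)/4000) → kX a ≤ 0 :=
  cell (p := ((1851:ℝ)/4000)) (q := ((2009:ℝ)/4000)) (r := ((444899:ℝ)/400000)) (wq := ((21173:ℝ)/10000)) (σ := ((35331231:ℝ)/10000000)) (B := ((53150550033:ℝ)/500000000000))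
    (by norm_num) (by norm_num) (by norm_num) (by norm_num) (by norm_num) (by norm_num)
    (by norm_num) (by norm_num) (by norm_num) (by norm_num)
    (exp_upper (S := ((1175905046353847745220426841579:ℝ)/125000000000000000000000000000)) (by norm_num)
      (by norm_num [Finset.sum_range_succ, Nat.factorial]) (by norm_num) (by norm_num))
    (by norm_num) (by norm_num) (by norm_num)

lemma cell23 : ∀ a : ℝ, ((2009:ℝ)/4000) ≤ a → a ≤ ((26429:ℝ)/50000) → kX a ≤ 0 :=
  cell (p := ((2009:ℝ)/4000)) (q := ((26429:ℝ)/50000)) (r := ((2176917:ℝ)/2000000)) (wq := ((88651:ℝ)/40000)) (σ := ((35933097:ℝ)/10000000)) (B := ((10722842719:ℝ)/125000000000))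
    (by norm_num) (by norm_num) (by norm_num) (by norm_num) (by norm_num) (by norm_num)
    (by norm_num) (by norm_num) (by norm_num) (by norm_num)
    (exp_upper (S := ((291433911876276291360415486033:ℝ)/25000000000000000000000000000)) (by norm_num)
      (by norm_num [Finset.sum_range_succ, Nat.factorial]) (by norm_num) (by norm_num))
    (by norm_num) (by norm_num) (by norm_num)

lemma cell24 : ∀ a : ℝ, ((26429:ℝ)/50000) ≤ a → a ≤ ((55491:ℝ)/100000) → kX a ≤ 0 :=
  cell (p := ((26429:ℝ)/50000)) (q := ((55491:ℝ)/100000)) (r := ((5334701:ℝ)/5000000)) (wq := ((457729:ℝ)/200000)) (σ := ((36383919:ℝ)/10000000)) (B := ((72879494071:ℝ)/1000000000000))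
    (by norm_num) (by norm_num) (by norm_num) (by norm_num) (by norm_num) (by norm_num)
    (by norm_num) (by norm_num) (by norm_num) (by norm_num)
    (exp_upper (S := ((6860640381491228234697247608961:ℝ)/500000000000000000000000000000)) (by norm_num)
      (by norm_num [Finset.sum_range_succ, Nat.factorial]) (by norm_num) (by norm_num))
    (by norm_num) (by norm_num) (by norm_num)

lemma cell25 : ∀ a : ℝ, ((55491:ℝ)/100000) ≤ a → a ≤ ((28623:ℝ)/50000) → kX a ≤ 0 :=
  cell (p := ((55491:ℝ)/100000)) (q := ((28623:ℝ)/50000)) (r := ((5269671:ℝ)/5000000)) (wq := ((2366989:ℝ)/1000000)) (σ := ((4610219:ℝ)/1250000)) (B := ((15182484909:ℝ)/250000000000))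
    (by norm_num) (by norm_num) (by norm_num) (by norm_num) (by norm_num) (by norm_num)
    (by norm_num) (by norm_num) (by norm_num) (by norm_num)
    (exp_upper (S := ((8233171364962463836067871165947:ℝ)/500000000000000000000000000000)) (by norm_num)
      (by norm_num [Finset.sum_range_succ, Nat.factorial]) (by norm_num) (by norm_num))
    (by norm_num) (by norm_num) (by norm_num)

lemma cell26 : ∀ a : ℝ, ((28623:ℝ)/50000) ≤ a → a ≤ ((59001:ℝ)/100000) → kX a ≤ 0 :=
  cell (p := ((28623:ℝ)/50000)) (q := ((59001:ℝ)/100000)) (r := ((10420673:ℝ)/10000000)) (wq := ((2422971:ℝ)/1000000)) (σ := ((37243507:ℝ)/10000000)) (B := ((5310977753:ℝ)/100000000000))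
    (by norm_num) (by norm_num) (by norm_num) (by norm_num) (by norm_num) (by norm_num)
    (by norm_num) (by norm_num) (by norm_num) (by norm_num)
    (exp_upper (S := ((18828924663555711948030301796453:ℝ)/1000000000000000000000000000000)) (by norm_num)
      (by norm_num [Finset.sum_range_succ, Nat.factorial]) (by norm_num) (by norm_num))
    (by norm_num) (by norm_num) (by norm_num)

lemma cell27 : ∀ a : ℝ, ((59001:ℝ)/100000) ≤ a → a ≤ ((60171:ℝ)/100000) → kX a ≤ 0 :=
  cell (p := ((59001:ℝ)/100000)) (q := ((60171:ℝ)/100000)) (r := ((10348257:ℝ)/10000000)) (wq := ((248233:ℝ)/100000)) (σ := ((18816191:ℝ)/5000000)) (B := ((45914187471:ℝ)/1000000000000))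
    (by norm_num) (by norm_num) (by norm_num) (by norm_num) (by norm_num) (by norm_num)
    (by norm_num) (by norm_num) (by norm_num) (by norm_num)
    (exp_upper (S := ((10889880177392272513219593494847:ℝ)/500000000000000000000000000000)) (by norm_num)
      (by norm_num [Finset.sum_range_succ, Nat.factorial]) (by norm_num) (by norm_num))
    (by norm_num) (by norm_num) (by norm_num)

lemma cell28 : ∀ a : ℝ, ((60171:ℝ)/100000) ≤ a → a ≤ ((61341:ℝ)/100000) → kX a ≤ 0 :=
  cell (p := ((60171:ℝ)/100000)) (q := ((61341:ℝ)/100000)) (r := ((5140751:ℝ)/5000000)) (wq := ((2523959:ℝ)/1000000)) (σ := ((37908269:ℝ)/10000000)) (B := ((41370611523:ℝ)/1000000000000))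
    (by norm_num) (by norm_num) (by norm_num) (by norm_num) (by norm_num) (by norm_num)
    (by norm_num) (by norm_num) (by norm_num) (by norm_num)
    (exp_upper (S := ((24171748088975827938435816774277:ℝ)/1000000000000000000000000000000)) (by norm_num)
      (by norm_num [Finset.sum_range_succ, Nat.factorial]) (by norm_num) (by norm_num))
    (by norm_num) (by norm_num) (by norm_num)

lemma cell29 : ∀ a : ℝ, ((61341:ℝ)/100000) ≤ a → a ≤ ((62121:ℝ)/100000) → kX a ≤ 0 :=
  cell (p := ((61341:ℝ)/100000)) (q := ((62121:ℝ)/100000)) (r := ((5120147:ℝ)/5000000)) (wq := ((160461:ℝ)/62500)) (σ := ((9549679:ℝ)/2500000)) (B := ((37041744867:ℝ)/1000000000000))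
    (by norm_num) (by norm_num) (by norm_num) (by norm_num) (by norm_num) (by norm_num)
    (by norm_num) (by norm_num) (by norm_num) (by norm_num)
    (exp_upper (S := ((26996568428545708187204474262217:ℝ)/1000000000000000000000000000000)) (by norm_num)
      (by norm_num [Finset.sum_range_succ, Nat.factorial]) (by norm_num) (by norm_num))
    (by norm_num) (by norm_num) (by norm_num)

lemma cell30 : ∀ a : ℝ, ((62121:ℝ)/100000) ≤ a → a ≤ ((62901:ℝ)/100000) → kX a ≤ 0 :=
  cell (p := ((62121:ℝ)/100000)) (q := ((62901:ℝ)/100000)) (r := ((127523:ℝ)/125000)) (wq := ((1298691:ℝ)/500000)) (σ := ((4800129:ℝ)/1250000)) (B := ((34279882019:ℝ)/1000000000000))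
    (by norm_num) (by norm_num) (by norm_num) (by norm_num) (by norm_num) (by norm_num)
    (by norm_num) (by norm_num) (by norm_num) (by norm_num)
    (exp_upper (S := ((7292907247049004339832161284057:ℝ)/250000000000000000000000000000)) (by norm_num)
      (by norm_num [Finset.sum_range_succ, Nat.factorial]) (by norm_num) (by norm_num))
    (by norm_num) (by norm_num) (by norm_num)

lemma cell31 : ∀ a : ℝ, ((62901:ℝ)/100000) ≤ a → a ≤ ((63681:ℝ)/100000) → kX a ≤ 0 :=
  cell (p := ((62901:ℝ)/100000)) (q := ((63681:ℝ)/100000)) (r := ((10166251:ℝ)/10000000)) (wq := ((2628287:ℝ)/1000000)) (σ := ((1930537:ℝ)/500000)) (B := ((15810303081:ℝ)/500000000000))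
    (by norm_num) (by norm_num) (by norm_num) (by norm_num) (by norm_num) (by norm_num)
    (by norm_num) (by norm_num) (by norm_num) (by norm_num)
    (exp_upper (S := ((988279599706893965236654715903:ℝ)/31250000000000000000000000000)) (by norm_num)
      (by norm_num [Finset.sum_range_succ, Nat.factorial]) (by norm_num) (by norm_num))
    (by norm_num) (by norm_num) (by norm_num)

lemma cell32 : ∀ a : ℝ, ((63681:ℝ)/100000) ≤ a → a ≤ ((64201:ℝ)/100000) → kX a ≤ 0 :=
  cell (p := ((63681:ℝ)/100000)) (q := ((64201:ℝ)/100000)) (r := ((10144177:ℝ)/10000000)) (wq := ((133007:ℝ)/50000)) (σ := ((38828269:ℝ)/10000000)) (B := ((14533200019:ℝ)/500000000000))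
    (by norm_num) (by norm_num) (by norm_num) (by norm_num) (by norm_num) (by norm_num)
    (by norm_num) (by norm_num) (by norm_num) (by norm_num)
    (exp_upper (S := ((1720199265665271531920840766823:ℝ)/50000000000000000000000000000)) (by norm_num)
      (by norm_num [Finset.sum_range_succ, Nat.factorial]) (by norm_num) (by norm_num))
    (by norm_num) (by norm_num) (by norm_num)

lemma cell33 : ∀ a : ℝ, ((64201:ℝ)/100000) ≤ a → a ≤ ((64547:ℝ)/100000) → kX a ≤ 0 :=
  cell (p := ((64201:ℝ)/100000)) (q := ((64547:ℝ)/100000)) (r := ((2026049:ℝ)/2000000)) (wq := ((2681927:ℝ)/1000000)) (σ := ((7795571:ℝ)/2000000)) (B := ((548463831:ℝ)/20000000000))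
    (by norm_num) (by norm_num) (by norm_num) (by norm_num) (by norm_num) (by norm_num)
    (by norm_num) (by norm_num) (by norm_num) (by norm_num)
    (exp_upper (S := ((36465485725359260724377631977883:ℝ)/1000000000000000000000000000000)) (by norm_num)
      (by norm_num [Finset.sum_range_succ, Nat.factorial]) (by norm_num) (by norm_num))
    (by norm_num) (by norm_num) (by norm_num)

lemma cell34 : ∀ a : ℝ, ((64547:ℝ)/100000) ≤ a → a ≤ ((64893:ℝ)/100000) → kX a ≤ 0 :=
  cell (p := ((64547:ℝ)/100000)) (q := ((64893:ℝ)/100000)) (r := ((1011693:ℝ)/1000000)) (wq := ((2696677:ℝ)/1000000)) (σ := ((39079491:ℝ)/10000000)) (B := ((5271336551:ℝ)/200000000000))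
    (by norm_num) (by norm_num) (by norm_num) (by norm_num) (by norm_num) (by norm_num)
    (by norm_num) (by norm_num) (by norm_num) (by norm_num)
    (exp_upper (S := ((18970520859945240473770490859543:ℝ)/500000000000000000000000000000)) (by norm_num)
      (by norm_num [Finset.sum_range_succ, Nat.factorial]) (by norm_num) (by norm_num))
    (by norm_num) (by norm_num) (by norm_num)

lemma cell35 : ∀ a : ℝ, ((64893:ℝ)/100000) ≤ a → a ≤ ((65239:ℝ)/100000) → kX a ≤ 0 :=
  cell (p := ((64893:ℝ)/100000)) (q := ((65239:ℝ)/100000)) (r := ((5052123:ℝ)/5000000)) (wq := ((677909:ℝ)/250000)) (σ := ((7836573:ℝ)/2000000)) (B := ((3163974021:ℝ)/125000000000))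
    (by norm_num) (by norm_num) (by norm_num) (by norm_num) (by norm_num) (by norm_num)
    (by norm_num) (by norm_num) (by norm_num) (by norm_num)
    (exp_upper (S := ((4938409701351033890127155005891:ℝ)/125000000000000000000000000000)) (by norm_num)
      (by norm_num [Finset.sum_range_succ, Nat.factorial]) (by norm_num) (by norm_num))
    (by norm_num) (by norm_num) (by norm_num)

lemma cell36 : ∀ a : ℝ, ((65239:ℝ)/100000) ≤ a → a ≤ ((65469:ℝ)/100000) → kX a ≤ 0 :=
  cell (p := ((65239:ℝ)/100000)) (q := ((65469:ℝ)/100000)) (r := ((10096169:ℝ)/10000000)) (wq := ((2726809:ℝ)/1000000)) (σ := ((19644011:ℝ)/5000000)) (B := ((12144354811:ℝ)/500000000000))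
    (by norm_num) (by norm_num) (by norm_num) (by norm_num) (by norm_num) (by norm_num)
    (by norm_num) (by norm_num) (by norm_num) (by norm_num)
    (exp_upper (S := ((20585696308842516855431393567019:ℝ)/500000000000000000000000000000)) (by norm_num)
      (by norm_num [Finset.sum_range_succ, Nat.factorial]) (by norm_num) (by norm_num))
    (by norm_num) (by norm_num) (by norm_num)

lemma cell37 : ∀ a : ℝ, ((65469:ℝ)/100000) ≤ a → a ≤ ((65699:ℝ)/100000) → kX a ≤ 0 :=
  cell (p := ((65469:ℝ)/100000)) (q := ((65699:ℝ)/100000)) (r := ((5044191:ℝ)/5000000)) (wq := ((342127:ℝ)/125000)) (σ := ((39358933:ℝ)/10000000)) (B := ((23620783633:ℝ)/1000000000000))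
    (by norm_num) (by norm_num) (by norm_num) (by norm_num) (by norm_num) (by norm_num)
    (by norm_num) (by norm_num) (by norm_num) (by norm_num)
    (exp_upper (S := ((42335597987525147367738384861653:ℝ)/1000000000000000000000000000000)) (by norm_num)
      (by norm_num [Finset.sum_range_succ, Nat.factorial]) (by norm_num) (by norm_num))
    (by norm_num) (by norm_num) (by norm_num)

lemma cell38 : ∀ a : ℝ, ((65699:ℝ)/100000) ≤ a → a ≤ ((65929:ℝ)/100000) → kX a ≤ 0 :=
  cell (p := ((65699:ℝ)/100000)) (q := ((65929:ℝ)/100000)) (r := ((5040443:ℝ)/5000000)) (wq := ((2747321:ℝ)/1000000)) (σ := ((4928833:ℝ)/1250000)) (B := ((11481324513:ℝ)/500000000000))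
    (by norm_num) (by norm_num) (by norm_num) (by norm_num) (by norm_num) (by norm_num)
    (by norm_num) (by norm_num) (by norm_num) (by norm_num)
    (exp_upper (S := ((21774491237900944493376841273533:ℝ)/500000000000000000000000000000)) (by norm_num)
      (by norm_num [Finset.sum_range_succ, Nat.factorial]) (by norm_num) (by norm_num))
    (by norm_num) (by norm_num) (by norm_num)

lemma cell39 : ∀ a : ℝ, ((65929:ℝ)/100000) ≤ a → a ≤ ((33041:ℝ)/50000) → kX a ≤ 0 :=
  cell (p := ((65929:ℝ)/100000)) (q := ((33041:ℝ)/50000)) (r := ((314877:ℝ)/312500)) (wq := ((1378863:ℝ)/500000)) (σ := ((39503231:ℝ)/10000000)) (B := ((22314326887:ℝ)/1000000000000))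
    (by norm_num) (by norm_num) (by norm_num) (by norm_num) (by norm_num) (by norm_num)
    (by norm_num) (by norm_num) (by norm_num) (by norm_num)
    (exp_upper (S := ((44814257902396402730208948704609:ℝ)/1000000000000000000000000000000)) (by norm_num)
      (by norm_num [Finset.sum_range_succ, Nat.factorial]) (by norm_num) (by norm_num))
    (by norm_num) (by norm_num) (by norm_num)

lemma cell40 : ∀ a : ℝ, ((33041:ℝ)/50000) ≤ a → a ≤ ((13247:ℝ)/20000) → kX a ≤ 0 :=
  cell (p := ((33041:ℝ)/50000)) (q := ((13247:ℝ)/20000)) (r := ((80571:ℝ)/80000)) (wq := ((86397:ℝ)/31250)) (σ := ((4943997:ℝ)/1250000)) (B := ((21888495413:ℝ)/1000000000000))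
    (by norm_num) (by norm_num) (by norm_num) (by norm_num) (by norm_num) (by norm_num)
    (by norm_num) (by norm_num) (by norm_num) (by norm_num)
    (exp_upper (S := ((22843050222086461795552818226483:ℝ)/500000000000000000000000000000)) (by norm_num)
      (by norm_num [Finset.sum_range_succ, Nat.factorial]) (by norm_num) (by norm_num))
    (by norm_num) (by norm_num) (by norm_num)

lemma cell41 : ∀ a : ℝ, ((13247:ℝ)/20000) ≤ a → a ≤ ((16597:ℝ)/25000) → kX a ≤ 0 :=
  cell (p := ((13247:ℝ)/20000)) (q := ((16597:ℝ)/25000)) (r := ((503341:ℝ)/500000)) (wq := ((173233:ℝ)/62500)) (σ := ((19800553:ℝ)/5000000)) (B := ((10733503797:ℝ)/500000000000))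
    (by norm_num) (by norm_num) (by norm_num) (by norm_num) (by norm_num) (by norm_num)
    (by norm_num) (by norm_num) (by norm_num) (by norm_num)
    (exp_upper (S := ((46583111113885476071111278119217:ℝ)/1000000000000000000000000000000)) (by norm_num)
      (by norm_num [Finset.sum_range_succ, Nat.factorial]) (by norm_num) (by norm_num))
    (by norm_num) (by norm_num) (by norm_num)

lemma cell42 : ∀ a : ℝ, ((16597:ℝ)/25000) ≤ a → a ≤ ((66541:ℝ)/100000) → kX a ≤ 0 :=
  cell (p := ((16597:ℝ)/25000)) (q := ((66541:ℝ)/100000)) (r := ((10062401:ℝ)/10000000)) (wq := ((2778797:ℝ)/1000000)) (σ := ((7930123:ℝ)/2000000)) (B := ((10524982479:ℝ)/500000000000))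
    (by norm_num) (by norm_num) (by norm_num) (by norm_num) (by norm_num) (by norm_num)
    (by norm_num) (by norm_num) (by norm_num) (by norm_num)
    (exp_upper (S := ((23753008663943703695792231933237:ℝ)/500000000000000000000000000000)) (by norm_num)
      (by norm_num [Finset.sum_range_succ, Nat.factorial]) (by norm_num) (by norm_num))
    (by norm_num) (by norm_num) (by norm_num)

lemma cell43 : ∀ a : ℝ, ((66541:ℝ)/100000) ≤ a → a ≤ ((66643:ℝ)/100000) → kX a ≤ 0 :=
  cell (p := ((66541:ℝ)/100000)) (q := ((66643:ℝ)/100000)) (r := ((1005953:ℝ)/1000000)) (wq := ((2785913:ℝ)/1000000)) (σ := ((39700517:ℝ)/10000000)) (B := ((20637290489:ℝ)/1000000000000))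
    (by norm_num) (by norm_num) (by norm_num) (by norm_num) (by norm_num) (by norm_num)
    (by norm_num) (by norm_num) (by norm_num) (by norm_num)
    (exp_upper (S := ((48455973451242603741391025774993:ℝ)/1000000000000000000000000000000)) (by norm_num)
      (by norm_num [Finset.sum_range_succ, Nat.factorial]) (by norm_num) (by norm_num))
    (by norm_num) (by norm_num) (by norm_num)

lemma cell44 : ∀ a : ℝ, ((66643:ℝ)/100000) ≤ a → a ≤ ((13349:ℝ)/20000) → kX a ≤ 0 :=
  cell (p := ((66643:ℝ)/100000)) (q := ((13349:ℝ)/20000)) (r := ((10056721:ℝ)/10000000)) (wq := ((2790683:ℝ)/1000000)) (σ := ((7946801:ℝ)/2000000)) (B := ((2036462803:ℝ)/100000000000))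
    (by norm_num) (by norm_num) (by norm_num) (by norm_num) (by norm_num) (by norm_num)
    (by norm_num) (by norm_num) (by norm_num) (by norm_num)
    (exp_upper (S := ((49104751560492000180521383316493:ℝ)/1000000000000000000000000000000)) (by norm_num)
      (by norm_num [Finset.sum_range_succ, Nat.factorial]) (by norm_num) (by norm_num))
    (by norm_num) (by norm_num) (by norm_num)

lemma cell45 : ∀ a : ℝ, ((13349:ℝ)/20000) ≤ a → a ≤ ((66847:ℝ)/100000) → kX a ≤ 0 :=
  cell (p := ((13349:ℝ)/20000)) (q := ((66847:ℝ)/100000)) (r := ((10053973:ℝ)/10000000)) (wq := ((111819:ℝ)/40000)) (σ := ((1590707:ℝ)/400000)) (B := ((20093874979:ℝ)/1000000000000))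
    (by norm_num) (by norm_num) (by norm_num) (by norm_num) (by norm_num) (by norm_num)
    (by norm_num) (by norm_num) (by norm_num) (by norm_num)
    (exp_upper (S := ((24883204486157531095011129098431:ℝ)/500000000000000000000000000000)) (by norm_num)
      (by norm_num [Finset.sum_range_succ, Nat.factorial]) (by norm_num) (by norm_num))
    (by norm_num) (by norm_num) (by norm_num)

lemma cell46 : ∀ a : ℝ, ((66847:ℝ)/100000) ≤ a → a ≤ ((66949:ℝ)/100000) → kX a ≤ 0 :=
  cell (p := ((66847:ℝ)/100000)) (q := ((66949:ℝ)/100000)) (r := ((10051287:ℝ)/10000000)) (wq := ((2800287:ℝ)/1000000)) (σ := ((9950379:ℝ)/2500000)) (B := ((19825156029:ℝ)/1000000000000))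
    (by norm_num) (by norm_num) (by norm_num) (by norm_num) (by norm_num) (by norm_num)
    (by norm_num) (by norm_num) (by norm_num) (by norm_num)
    (exp_upper (S := ((25220482465424750119267670289649:ℝ)/500000000000000000000000000000)) (by norm_num)
      (by norm_num [Finset.sum_range_succ, Nat.factorial]) (by norm_num) (by norm_num))
    (by norm_num) (by norm_num) (by norm_num)

lemma cell47 : ∀ a : ℝ, ((66949:ℝ)/100000) ≤ a → a ≤ ((67051:ℝ)/100000) → kX a ≤ 0 :=
  cell (p := ((66949:ℝ)/100000)) (q := ((67051:ℝ)/100000)) (r := ((1256083:ℝ)/1250000)) (wq := ((2805121:ℝ)/1000000)) (σ := ((39835541:ℝ)/10000000)) (B := ((19558370761:ℝ)/1000000000000))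
    (by norm_num) (by norm_num) (by norm_num) (by norm_num) (by norm_num) (by norm_num)
    (by norm_num) (by norm_num) (by norm_num) (by norm_num)
    (exp_upper (S := ((25564501569893616093250201627957:ℝ)/500000000000000000000000000000)) (by norm_num)
      (by norm_num [Finset.sum_range_succ, Nat.factorial]) (by norm_num) (by norm_num))
    (by norm_num) (by norm_num) (by norm_num)

lemma cell48 : ∀ a : ℝ, ((67051:ℝ)/100000) ≤ a → a ≤ ((67153:ℝ)/100000) → kX a ≤ 0 :=
  cell (p := ((67051:ℝ)/100000)) (q := ((67153:ℝ)/100000)) (r := ((1255763:ℝ)/1250000)) (wq := ((2809977:ℝ)/1000000)) (σ := ((39869751:ℝ)/10000000)) (B := ((4823382993:ℝ)/250000000000))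
    (by norm_num) (by norm_num) (by norm_num) (by norm_num) (by norm_num) (by norm_num)
    (by norm_num) (by norm_num) (by norm_num) (by norm_num)
    (exp_upper (S := ((25915420812811594645240500440349:ℝ)/500000000000000000000000000000)) (by norm_num)
      (by norm_num [Finset.sum_range_succ, Nat.factorial]) (by norm_num) (by norm_num))
    (by norm_num) (by norm_num) (by norm_num)

lemma cell49 : ∀ a : ℝ, ((67153:ℝ)/100000) ≤ a → a ≤ ((13451:ℝ)/20000) → kX a ≤ 0 :=
  cell (p := ((67153:ℝ)/100000)) (q := ((13451:ℝ)/20000)) (r := ((10043607:ℝ)/10000000)) (wq := ((1407427:ℝ)/500000)) (σ := ((19952069:ℝ)/5000000)) (B := ((19030705589:ℝ)/1000000000000))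
    (by norm_num) (by norm_num) (by norm_num) (by norm_num) (by norm_num) (by norm_num)
    (by norm_num) (by norm_num) (by norm_num) (by norm_num)
    (exp_upper (S := ((1642083098513976944454932813229:ℝ)/31250000000000000000000000000)) (by norm_num)
      (by norm_num [Finset.sum_range_succ, Nat.factorial]) (by norm_num) (by norm_num))
    (by norm_num) (by norm_num) (by norm_num)

lemma cell50 : ∀ a : ℝ, ((13451:ℝ)/20000) ≤ a → a ≤ ((67357:ℝ)/100000) → kX a ≤ 0 :=
  cell (p := ((13451:ℝ)/20000)) (q := ((67357:ℝ)/100000)) (r := ((5020587:ℝ)/5000000)) (wq := ((2819753:ℝ)/1000000)) (σ := ((39938711:ℝ)/10000000)) (B := ((750793947:ℝ)/40000000000))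
    (by norm_num) (by norm_num) (by norm_num) (by norm_num) (by norm_num) (by norm_num)
    (by norm_num) (by norm_num) (by norm_num) (by norm_num)
    (exp_upper (S := ((26638467292303411945327893396251:ℝ)/500000000000000000000000000000)) (by norm_num)
      (by norm_num [Finset.sum_range_succ, Nat.factorial]) (by norm_num) (by norm_num))
    (by norm_num) (by norm_num) (by norm_num)

lemma cell51 : ∀ a : ℝ, ((67357:ℝ)/100000) ≤ a → a ≤ ((67459:ℝ)/100000) → kX a ≤ 0 :=
  cell (p := ((67357:ℝ)/100000)) (q := ((67459:ℝ)/100000)) (r := ((2007761:ℝ)/2000000)) (wq := ((112987:ℝ)/40000)) (σ := ((39973477:ℝ)/10000000)) (B := ((740436817:ℝ)/40000000000))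
    (by norm_num) (by norm_num) (by norm_num) (by norm_num) (by norm_num) (by norm_num)
    (by norm_num) (by norm_num) (by norm_num) (by norm_num)
    (exp_upper (S := ((13505541283789702961422141237729:ℝ)/250000000000000000000000000000)) (by norm_num)
      (by norm_num [Finset.sum_range_succ, Nat.factorial]) (by norm_num) (by norm_num))
    (by norm_num) (by norm_num) (by norm_num)

lemma cell52 : ∀ a : ℝ, ((67459:ℝ)/100000) ≤ a → a ≤ ((67561:ℝ)/100000) → kX a ≤ 0 :=
  cell (p := ((67459:ℝ)/100000)) (q := ((67561:ℝ)/100000)) (r := ((10036501:ℝ)/10000000)) (wq := ((1414809:ℝ)/500000)) (σ := ((40008421:ℝ)/10000000)) (B := ((18254037091:ℝ)/1000000000000))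
    (by norm_num) (by norm_num) (by norm_num) (by norm_num) (by norm_num) (by norm_num)
    (by norm_num) (by norm_num) (by norm_num) (by norm_num)
    (exp_upper (S := ((855975032934877711983944221269:ℝ)/15625000000000000000000000000)) (by norm_num)
      (by norm_num [Finset.sum_range_succ, Nat.factorial]) (by norm_num) (by norm_num))
    (by norm_num) (by norm_num) (by norm_num)

lemma cell53 : ∀ a : ℝ, ((67561:ℝ)/100000) ≤ a → a ≤ ((67663:ℝ)/100000) → kX a ≤ 0 :=
  cell (p := ((67561:ℝ)/100000)) (q := ((67663:ℝ)/100000)) (r := ((5017131:ℝ)/5000000)) (wq := ((354323:ℝ)/125000)) (σ := ((40043559:ℝ)/10000000)) (B := ((719964213:ℝ)/40000000000))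
    (by norm_num) (by norm_num) (by norm_num) (by norm_num) (by norm_num) (by norm_num)
    (by norm_num) (by norm_num) (by norm_num) (by norm_num)
    (exp_upper (S := ((13889579259404159146402186678421:ℝ)/250000000000000000000000000000)) (by norm_num)
      (by norm_num [Finset.sum_range_succ, Nat.factorial]) (by norm_num) (by norm_num))
    (by norm_num) (by norm_num) (by norm_num)

lemma cell54 : ∀ a : ℝ, ((67663:ℝ)/100000) ≤ a → a ≤ ((13553:ℝ)/20000) → kX a ≤ 0 :=
  cell (p := ((67663:ℝ)/100000)) (q := ((13553:ℝ)/20000)) (r := ((1254011:ℝ)/1250000)) (wq := ((2839573:ℝ)/1000000)) (σ := ((4007889:ℝ)/1000000)) (B := ((17746137167:ℝ)/1000000000000))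
    (by norm_num) (by norm_num) (by norm_num) (by norm_num) (by norm_num) (by norm_num)
    (by norm_num) (by norm_num) (by norm_num) (by norm_num)
    (exp_upper (S := ((1127005827369655396389646870247:ℝ)/20000000000000000000000000000)) (by norm_num)
      (by norm_num [Finset.sum_range_succ, Nat.factorial]) (by norm_num) (by norm_num))
    (by norm_num) (by norm_num) (by norm_num)

lemma cell55 : ∀ a : ℝ, ((13553:ℝ)/20000) ≤ a → a ≤ ((67867:ℝ)/100000) → kX a ≤ 0 :=
  cell (p := ((13553:ℝ)/20000)) (q := ((67867:ℝ)/100000)) (r := ((10029981:ℝ)/10000000)) (wq := ((355573:ℝ)/125000)) (σ := ((40114409:ℝ)/10000000)) (B := ((8747596981:ℝ)/500000000000))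
    (by norm_num) (by norm_num) (by norm_num) (by norm_num) (by norm_num) (by norm_num)
    (by norm_num) (by norm_num) (by norm_num) (by norm_num)
    (exp_upper (S := ((1786204832499753700218938048013:ℝ)/31250000000000000000000000000)) (by norm_num)
      (by norm_num [Finset.sum_range_succ, Nat.factorial]) (by norm_num) (by norm_num))
    (by norm_num) (by norm_num) (by norm_num)

lemma cell56 : ∀ a : ℝ, ((67867:ℝ)/100000) ≤ a → a ≤ ((67969:ℝ)/100000) → kX a ≤ 0 :=
  cell (p := ((67867:ℝ)/100000)) (q := ((67969:ℝ)/100000)) (r := ((10027941:ℝ)/10000000)) (wq := ((1424809:ℝ)/500000)) (σ := ((40150121:ℝ)/10000000)) (B := ((3449247163:ℝ)/200000000000))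
    (by norm_num) (by norm_num) (by norm_num) (by norm_num) (by norm_num) (by norm_num)
    (by norm_num) (by norm_num) (by norm_num) (by norm_num)
    (exp_upper (S := ((57983667320140530147747589581589:ℝ)/1000000000000000000000000000000)) (by norm_num)
      (by norm_num [Finset.sum_range_succ, Nat.factorial]) (by norm_num) (by norm_num))
    (by norm_num) (by norm_num) (by norm_num)

lemma cell57 : ∀ a : ℝ, ((67969:ℝ)/100000) ≤ a → a ≤ ((34061:ℝ)/50000) → kX a ≤ 0 :=
  cell (p := ((67969:ℝ)/100000)) (q := ((34061:ℝ)/50000)) (r := ((5012503:ℝ)/5000000)) (wq := ((713669:ℝ)/250000)) (σ := ((10046509:ℝ)/2500000)) (B := ((849961243:ℝ)/50000000000))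
    (by norm_num) (by norm_num) (by norm_num) (by norm_num) (by norm_num) (by norm_num)
    (by norm_num) (by norm_num) (by norm_num) (by norm_num)
    (exp_upper (S := ((2353048467297182604715356176487:ℝ)/40000000000000000000000000000)) (by norm_num)
      (by norm_num [Finset.sum_range_succ, Nat.factorial]) (by norm_num) (by norm_num))
    (by norm_num) (by norm_num) (by norm_num)

lemma cell58 : ∀ a : ℝ, ((34061:ℝ)/50000) ≤ a → a ≤ ((2731:ℝ)/4000) → kX a ≤ 0 :=
  cell (p := ((34061:ℝ)/50000)) (q := ((2731:ℝ)/4000)) (r := ((626389:ℝ)/625000)) (wq := ((1431153:ℝ)/500000)) (σ := ((2515017:ℝ)/625000)) (B := ((259882513:ℝ)/15625000000))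
    (by norm_num) (by norm_num) (by norm_num) (by norm_num) (by norm_num) (by norm_num)
    (by norm_num) (by norm_num) (by norm_num) (by norm_num)
    (exp_upper (S := ((15030830489553980786050677878473:ℝ)/250000000000000000000000000000)) (by norm_num)
      (by norm_num [Finset.sum_range_succ, Nat.factorial]) (by norm_num) (by norm_num))
    (by norm_num) (by norm_num) (by norm_num)

lemma cell59 : ∀ a : ℝ, ((2731:ℝ)/4000) ≤ a → a ≤ ((13701:ℝ)/20000) → kX a ≤ 0 :=
  cell (p := ((2731:ℝ)/4000)) (q := ((13701:ℝ)/20000)) (r := ((2504583:ℝ)/2500000)) (wq := ((2869989:ℝ)/1000000)) (σ := ((20147479:ℝ)/5000000)) (B := ((8135113303:ℝ)/500000000000))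
    (by norm_num) (by norm_num) (by norm_num) (by norm_num) (by norm_num) (by norm_num)
    (by norm_num) (by norm_num) (by norm_num) (by norm_num)
    (exp_upper (S := ((61461958967783771780716177698209:ℝ)/1000000000000000000000000000000)) (by norm_num)
      (by norm_num [Finset.sum_range_succ, Nat.factorial]) (by norm_num) (by norm_num))
    (by norm_num) (by norm_num) (by norm_num)

lemma cell60 : ∀ a : ℝ, ((13701:ℝ)/20000) ≤ a → a ≤ ((13747:ℝ)/20000) → kX a ≤ 0 :=
  cell (p := ((13701:ℝ)/20000)) (q := ((13747:ℝ)/20000)) (r := ((2503699:ℝ)/2500000)) (wq := ((72041:ℝ)/25000)) (σ := ((1615121:ℝ)/400000)) (B := ((491690823:ℝ)/31250000000))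
    (by norm_num) (by norm_num) (by norm_num) (by norm_num) (by norm_num) (by norm_num)
    (by norm_num) (by norm_num) (by norm_num) (by norm_num)
    (exp_upper (S := ((63556199424634811843916428447039:ℝ)/1000000000000000000000000000000)) (by norm_num)
      (by norm_num [Finset.sum_range_succ, Nat.factorial]) (by norm_num) (by norm_num))
    (by norm_num) (by norm_num) (by norm_num)

lemma cell61 : ∀ a : ℝ, ((13747:ℝ)/20000) ≤ a → a ≤ ((69081:ℝ)/100000) → kX a ≤ 0 :=
  cell (p := ((13747:ℝ)/20000)) (q := ((69081:ℝ)/100000)) (r := ((10010159:ℝ)/10000000)) (wq := ((1446707:ℝ)/500000)) (σ := ((5057767:ℝ)/1250000)) (B := ((15208173161:ℝ)/1000000000000))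
    (by norm_num) (by norm_num) (by norm_num) (by norm_num) (by norm_num) (by norm_num)
    (by norm_num) (by norm_num) (by norm_num) (by norm_num)
    (exp_upper (S := ((65754117172945699991804322703913:ℝ)/1000000000000000000000000000000)) (by norm_num)
      (by norm_num [Finset.sum_range_succ, Nat.factorial]) (by norm_num) (by norm_num))
    (by norm_num) (by norm_num) (by norm_num)

lemma cell62 : ∀ a : ℝ, ((69081:ℝ)/100000) ≤ a → a ≤ ((69861:ℝ)/100000) → kX a ≤ 0 :=
  cell (p := ((69081:ℝ)/100000)) (q := ((69861:ℝ)/100000)) (r := ((10002819:ℝ)/10000000)) (wq := ((1455683:ℝ)/500000)) (σ := ((40590703:ℝ)/10000000)) (B := ((14436060621:ℝ)/1000000000000))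
    (by norm_num) (by norm_num) (by norm_num) (by norm_num) (by norm_num) (by norm_num)
    (by norm_num) (by norm_num) (by norm_num) (by norm_num)
    (exp_upper (S := ((34635487696881524138374214266487:ℝ)/500000000000000000000000000000)) (by norm_num)
      (by norm_num [Finset.sum_range_succ, Nat.factorial]) (by norm_num) (by norm_num))
    (by norm_num) (by norm_num) (by norm_num)

lemma cell63 : ∀ a : ℝ, ((69861:ℝ)/100000) ≤ a → a ≤ ((70711:ℝ)/100000) → kX a ≤ 0 :=
  cell (p := ((69861:ℝ)/100000)) (q := ((70711:ℝ)/100000)) (r := ((2499977:ℝ)/2500000)) (wq := ((2952921:ℝ)/1000000)) (σ := ((40889781:ℝ)/10000000)) (B := ((6390016703:ℝ)/500000000000))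
    (by norm_num) (by norm_num) (by norm_num) (by norm_num) (by norm_num) (by norm_num)
    (by norm_num) (by norm_num) (by norm_num) (by norm_num)
    (exp_upper (S := ((78247056814520463036561867511413:ℝ)/1000000000000000000000000000000)) (by norm_num)
      (by norm_num [Finset.sum_range_succ, Nat.factorial]) (by norm_num) (by norm_num))
    (by norm_num) (by norm_num) (by norm_num)

end Part5

lemma kX_zero_lt : kX 0 < 0 := by
  have hu : uX 0 = Real.sqrt 2 := by unfold uX; norm_num
  have hv : vX 0 = Real.sqrt 2 := by unfold vX; norm_num
  have hP := Phibar_sqrt2_pos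
  have hphi := phi_pos (Real.sqrt 2)
  unfold kX
  rw [hu, hv, sq_sqrt_two]
  unfold g c1
  have hkey : 1/(2*2) < 1/(4*Phibar (Real.sqrt 2))/250*(251*Phibar (Real.sqrt 2)+phi (Real.sqrt 2)) := by
    rw [div_div, div_mul_eq_mul_div, lt_div_iff₀ (by positivity)]
    nlinarith
  linarith

theorem lemma_X11 :
    (∀ a : ℝ, 0 ≤ a → a < 1/Real.sqrt 2 → kX a ≤ 0) ∧ kX 0 < 0 := by
  constructor
  · intro a ha0 halt
    have hs2 : (0:ℝ) < Real.sqrt 2 := Real.sqrt_pos.2 (by norm_num)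
    have hslb := sqrt_two_lb
    have hmax : a ≤ ((70711:ℝ)/100000) := by
      have h : 1/Real.sqrt 2 ≤ ((70711:ℝ)/100000) := by
        rw [div_le_div_iff₀ hs2 (by norm_num)]
        nlinarith
      linarith
    rcases le_or_gt a ((153:ℝ)/100000) with h0|h0
    · exact cell0 a ha0 h0
    rcases le_or_gt a ((383:ℝ)/100000) with h1|h1
    · exact cell1 a h0.le h1
    rcases le_or_gt a ((613:ℝ)/100000) with h2|h2
    · exact cell2 a h1.le h2
    rcases le_or_gt a ((959:ℝ)/100000) with h3|h3
    · exact cell3 a h2.le h3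
    rcases le_or_gt a ((1479:ℝ)/100000) with h4|h4
    · exact cell4 a h3.le h4
    rcases le_or_gt a ((1999:ℝ)/100000) with h5|h5
    · exact cell5 a h4.le h5
    rcases le_or_gt a ((2779:ℝ)/100000) with h6|h6
    · exact cell6 a h5.le h6
    rcases le_or_gt a ((3559:ℝ)/100000) with h7|h7
    · exact cell7 a h6.le h7
    rcases le_or_gt a ((4729:ℝ)/100000) with h8|h8
    · exact cell8 a h7.le h8
    rcases le_or_gt a ((5899:ℝ)/100000) with h9|h9
    · exact cell9 a h8.le h9
    rcases le_or_gt a ((3827:ℝ)/50000) with h10|h10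
    · exact cell10 a h9.le h10
    rcases le_or_gt a ((9409:ℝ)/100000) with h11|h11
    · exact cell11 a h10.le h11
    rcases le_or_gt a ((6021:ℝ)/50000) with h12|h12
    · exact cell12 a h11.le h12
    rcases le_or_gt a ((587:ℝ)/4000) with h13|h13
    · exact cell13 a h12.le h13
    rcases le_or_gt a ((149:ℝ)/800) with h14|h14
    · exact cell14 a h13.le h14
    rcases le_or_gt a ((903:ℝ)/4000) with h15|h15
    · exact cell15 a h14.le h15
    rcases le_or_gt a ((1061:ℝ)/4000) with h16|h16
    · exact cell16 a h15.le h16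
    rcases le_or_gt a ((1219:ℝ)/4000) with h17|h17
    · exact cell17 a h16.le h17
    rcases le_or_gt a ((1377:ℝ)/4000) with h18|h18
    · exact cell18 a h17.le h18
    rcases le_or_gt a ((307:ℝ)/800) with h19|h19
    · exact cell19 a h18.le h19
    rcases le_or_gt a ((1693:ℝ)/4000) with h20|h20
    · exact cell20 a h19.le h20
    rcases le_or_gt a ((1851:ℝ)/4000) with h21|h21
    · exact cell21 a h20.le h21
    rcases le_or_gt a ((2009:ℝ)/4000) with h22|h22
    · exact cell22 a h21.le h22
    rcases le_or_gt a ((26429:ℝ)/50000) with h23|h23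
    · exact cell23 a h22.le h23
    rcases le_or_gt a ((55491:ℝ)/100000) with h24|h24
    · exact cell24 a h23.le h24
    rcases le_or_gt a ((28623:ℝ)/50000) with h25|h25
    · exact cell25 a h24.le h25
    rcases le_or_gt a ((59001:ℝ)/100000) with h26|h26
    · exact cell26 a h25.le h26
    rcases le_or_gt a ((60171:ℝ)/100000) with h27|h27
    · exact cell27 a h26.le h27
    rcases le_or_gt a ((61341:ℝ)/100000) with h28|h28
    · exact cell28 a h27.le h28
    rcases le_or_gt a ((62121:ℝ)/100000) with h29|h29
    · exact cell29 a h28.le h29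
    rcases le_or_gt a ((62901:ℝ)/100000) with h30|h30
    · exact cell30 a h29.le h30
    rcases le_or_gt a ((63681:ℝ)/100000) with h31|h31
    · exact cell31 a h30.le h31
    rcases le_or_gt a ((64201:ℝ)/100000) with h32|h32
    · exact cell32 a h31.le h32
    rcases le_or_gt a ((64547:ℝ)/100000) with h33|h33
    · exact cell33 a h32.le h33
    rcases le_or_gt a ((64893:ℝ)/100000) with h34|h34
    · exact cell34 a h33.le h34
    rcases le_or_gt a ((65239:ℝ)/100000) with h35|h35
    · exact cell35 a h34.le h35
    rcases le_or_gt a ((65469:ℝ)/100000) with h36|h36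
    · exact cell36 a h35.le h36
    rcases le_or_gt a ((65699:ℝ)/100000) with h37|h37
    · exact cell37 a h36.le h37
    rcases le_or_gt a ((65929:ℝ)/100000) with h38|h38
    · exact cell38 a h37.le h38
    rcases le_or_gt a ((33041:ℝ)/50000) with h39|h39
    · exact cell39 a h38.le h39
    rcases le_or_gt a ((13247:ℝ)/20000) with h40|h40
    · exact cell40 a h39.le h40
    rcases le_or_gt a ((16597:ℝ)/25000) with h41|h41
    · exact cell41 a h40.le h41
    rcases le_or_gt a ((66541:ℝ)/100000) with h42|h42
    · exact cell42 a h41.le h42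
    rcases le_or_gt a ((66643:ℝ)/100000) with h43|h43
    · exact cell43 a h42.le h43
    rcases le_or_gt a ((13349:ℝ)/20000) with h44|h44
    · exact cell44 a h43.le h44
    rcases le_or_gt a ((66847:ℝ)/100000) with h45|h45
    · exact cell45 a h44.le h45
    rcases le_or_gt a ((66949:ℝ)/100000) with h46|h46
    · exact cell46 a h45.le h46
    rcases le_or_gt a ((67051:ℝ)/100000) with h47|h47
    · exact cell47 a h46.le h47
    rcases le_or_gt a ((67153:ℝ)/100000) with h48|h48
    · exact cell48 a h47.le h48
    rcases le_or_gt a ((13451:ℝ)/20000) with h49|h49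
    · exact cell49 a h48.le h49
    rcases le_or_gt a ((67357:ℝ)/100000) with h50|h50
    · exact cell50 a h49.le h50
    rcases le_or_gt a ((67459:ℝ)/100000) with h51|h51
    · exact cell51 a h50.le h51
    rcases le_or_gt a ((67561:ℝ)/100000) with h52|h52
    · exact cell52 a h51.le h52
    rcases le_or_gt a ((67663:ℝ)/100000) with h53|h53
    · exact cell53 a h52.le h53
    rcases le_or_gt a ((13553:ℝ)/20000) with h54|h54
    · exact cell54 a h53.le h54
    rcases le_or_gt a ((67867:ℝ)/100000) with h55|h55
    · exact cell55 a h54.le h55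
    rcases le_or_gt a ((67969:ℝ)/100000) with h56|h56
    · exact cell56 a h55.le h56
    rcases le_or_gt a ((34061:ℝ)/50000) with h57|h57
    · exact cell57 a h56.le h57
    rcases le_or_gt a ((2731:ℝ)/4000) with h58|h58
    · exact cell58 a h57.le h58
    rcases le_or_gt a ((13701:ℝ)/20000) with h59|h59
    · exact cell59 a h58.le h59
    rcases le_or_gt a ((13747:ℝ)/20000) with h60|h60
    · exact cell60 a h59.le h60
    rcases le_or_gt a ((69081:ℝ)/100000) with h61|h61
    · exact cell61 a h60.le h61
    rcases le_or_gt a ((69861:ℝ)/100000) with h62|h62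
    · exact cell62 a h61.le h62
    exact cell63 a h62.le hmax
  · exact kX_zero_lt
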